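/- For the one-dimensional Hamiltonian system with H(x,p) = x²/(2k) + p²/(2m), integration time T = (π/2)√(km), and p₀ ∼ N(0,m) independent of x₀, the conditional distribution of x(T) given x₀ equals N(0,k), i.e. the proposal samples exactly from the target distribution N(0,k) independently of the starting point. -/

import Mathlib

open MeasureTheory ProbabilityTheory Real

lemma unique_sol (k m x₀ p₀ : ℝ) (hk : 0 < k) (hm : 0 < m)
    (X P : ℝ → ℝ)
    (hX : ∀ t, HasDerivAt X (P t / m) t)
    (hP : ∀ t, HasDerivAt P (-(X t) / k) t)
    (hX0 : X 0 = x₀) (hP0 : P 0 = p₀) (t : ℝ) :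
    X t = x₀ * Real.cos ((Real.sqrt (k*m))⁻¹ * t)
      + (Real.sqrt k / Real.sqrt m) * p₀ * Real.sin ((Real.sqrt (k*m))⁻¹ * t) := by
  set ω : ℝ := (Real.sqrt (k*m))⁻¹ with hωdef
  set c : ℝ := Real.sqrt k / Real.sqrt m with hcdef
  have hkm : (0:ℝ) < k * m := mul_pos hk hm
  have hs : (0:ℝ) < Real.sqrt (k*m) := Real.sqrt_pos.2 hkm
  have hω : 0 < ω := inv_pos.2 hs
  have hω2 : ω^2 = (k*m)⁻¹ := by
    rw [hωdef, inv_pow, Real.sq_sqrt hkm.le]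
  have hmω2 : m * ω^2 = 1/k := by
    rw [hω2]; field_simp
  have hcmω : c * (m * ω) = 1 := by
    rw [hcdef, hωdef, Real.sqrt_mul hk.le]
    have h1 : Real.sqrt k ≠ 0 := ne_of_gt (Real.sqrt_pos.2 hk)
    have h2 : Real.sqrt m ≠ 0 := ne_of_gt (Real.sqrt_pos.2 hm)
    have hmm : Real.sqrt m * Real.sqrt m = m := Real.mul_self_sqrt hm.le
    field_simp
    nlinarith [hmm, Real.sqrt_nonneg k]
  set s : ℝ → ℝ := fun u => x₀ * Real.cos (ω*u) + c*p₀ * Real.sin (ω*u) with hsdef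
  set q : ℝ → ℝ := fun u => m*ω*(-x₀ * Real.sin (ω*u) + c*p₀ * Real.cos (ω*u)) with hqdef
  have hid : ∀ u : ℝ, HasDerivAt (fun v => ω*v) ω u := by
    intro u; simpa using (hasDerivAt_id u).const_mul ω
  have hcos : ∀ u : ℝ, HasDerivAt (fun v => Real.cos (ω*v)) (-Real.sin (ω*u)*ω) u :=
    fun u => (hid u).cos
  have hsin : ∀ u : ℝ, HasDerivAt (fun v => Real.sin (ω*v)) (Real.cos (ω*u)*ω) u :=
    fun u => (hid u).sin
  have hs' : ∀ u, HasDerivAt s (q u / m) u := by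
    intro u
    have h := ((hcos u).const_mul x₀).add ((hsin u).const_mul (c*p₀))
    refine h.congr_deriv ?_
    rw [hqdef]; field_simp
  have hq' : ∀ u, HasDerivAt q (-(s u) / k) u := by
    intro u
    have h := (((hsin u).const_mul (-x₀)).add ((hcos u).const_mul (c*p₀))).const_mul (m*ω)
    refine h.congr_deriv ?_
    rw [hsdef]
    have : -(x₀ * Real.cos (ω * u) + c * p₀ * Real.sin (ω * u)) / k
        = -(m*ω^2) * (x₀ * Real.cos (ω * u) + c * p₀ * Real.sin (ω * u)) := by
      rw [hmω2]; field_simp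
    rw [this]; ring
  set a : ℝ → ℝ := fun u => X u - s u with hadef
  set b : ℝ → ℝ := fun u => P u - q u with hbdef
  have ha : ∀ u, HasDerivAt a (b u / m) u := by
    intro u
    have := (hX u).sub (hs' u)
    refine this.congr_deriv ?_
    rw [hbdef]; ring
  have hb : ∀ u, HasDerivAt b (-(a u) / k) u := by
    intro u
    have := (hP u).sub (hq' u)
    refine this.congr_deriv ?_
    rw [hadef]; ring
  set W : ℝ → ℝ := fun u => (a u)^2/k + (b u)^2/m with hWdef
  have hW : ∀ u, HasDerivAt W 0 u := by
    intro u
    have h := (((ha u).pow 2).div_const k).add (((hb u).pow 2).div_const m)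
    refine h.congr_deriv ?_
    field_simp
    ring
  have hWconst : ∀ u, W u = W 0 := by
    intro u
    exact is_const_of_deriv_eq_zero (fun v => (hW v).differentiableAt)
      (fun v => (hW v).deriv) u 0
  have ha0 : a 0 = 0 := by
    simp [hadef, hsdef, hX0]
  have hb0 : b 0 = 0 := by
    have : q 0 = p₀ := by
      simp only [hqdef, mul_zero, Real.sin_zero, Real.cos_zero]
      have : m * ω * (0 + c * p₀ * 1) = (c * (m * ω)) * p₀ := by ring
      rw [this, hcmω, one_mul]
    simp [hbdef, hP0, this]
  have hW0 : W 0 = 0 := by simp [hWdef, ha0, hb0]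
  have hWt : W t = 0 := by rw [hWconst t, hW0]
  have h1 : (a t)^2/k = 0 := by
    have hnn1 : 0 ≤ (a t)^2/k := div_nonneg (sq_nonneg _) hk.le
    have hnn2 : 0 ≤ (b t)^2/m := div_nonneg (sq_nonneg _) hm.le
    rw [hWdef] at hWt
    nlinarith
  have hat : a t = 0 := by
    have := (div_eq_zero_iff.1 h1).resolve_right (ne_of_gt hk)
    exact pow_eq_zero_iff (n := 2) (by norm_num) |>.1 this
  have : X t = s t := by
    have h : X t - s t = 0 := hat
    linarith
  simpa [hsdef] using this

/-- For the 1D Hamiltonian system with H(x,p) = x²/(2k) + p²/(2m),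
integration time T = (π/2)√(km), and p₀ ∼ N(0,m) independent of x₀, the
conditional distribution of x(T) given x₀ equals N(0,k): the proposal samples
exactly from the target, independently of the starting point. -/
theorem stmt5 (k m x₀ : ℝ) (hk : 0 < k) (hm : 0 < m)
    (X P : ℝ → ℝ → ℝ)
    (hX : ∀ p₀ t, HasDerivAt (X p₀) (P p₀ t / m) t)
    (hP : ∀ p₀ t, HasDerivAt (P p₀) (-(X p₀ t) / k) t)
    (hX0 : ∀ p₀, X p₀ 0 = x₀) (hP0 : ∀ p₀, P p₀ 0 = p₀) :
    Measure.map (fun p₀ => X p₀ (Real.pi / 2 * Real.sqrt (k * m)))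
        (gaussianReal 0 m.toNNReal)
      = gaussianReal 0 k.toNNReal := by
  set c : ℝ := Real.sqrt k / Real.sqrt m with hcdef
  have hkm : (0:ℝ) < k * m := mul_pos hk hm
  have hs : (0:ℝ) < Real.sqrt (k*m) := Real.sqrt_pos.2 hkm
  have hXT : ∀ p₀, X p₀ (Real.pi / 2 * Real.sqrt (k * m)) = c * p₀ := by
    intro p₀
    have h := unique_sol k m x₀ p₀ hk hm (X p₀) (P p₀) (hX p₀) (hP p₀)
      (hX0 p₀) (hP0 p₀) (Real.pi / 2 * Real.sqrt (k * m))
    have harg : (Real.sqrt (k*m))⁻¹ * (Real.pi / 2 * Real.sqrt (k * m)) = Real.pi / 2 := by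
      field_simp
    rw [harg] at h
    simpa [Real.cos_pi_div_two, Real.sin_pi_div_two] using h
  have hfun : (fun p₀ => X p₀ (Real.pi / 2 * Real.sqrt (k * m))) = (c * ·) := by
    funext p₀; exact hXT p₀
  rw [hfun, gaussianReal_map_const_mul]
  congr 1
  · simp
  · have hc2 : c^2 = k / m := by
      rw [hcdef, div_pow, Real.sq_sqrt hk.le, Real.sq_sqrt hm.le]
    apply NNReal.coe_injective
    push_cast
    rw [Real.coe_toNNReal _ hm.le, Real.coe_toNNReal _ hk.le, hc2]
    field_simp
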